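/- For reduced p/q with q ≥ 2, let 0 < τ₋ < τ₊ < 1 be the two angles of exact period q under doubling σ(θ)=2θ mod 1 whose orbit intervals σ^j([τ₋,τ₊]), 0 ≤ j < q, are pairwise interiorly disjoint. Then 0 ∈ σ^{q−1}([τ₋,τ₊]) and 1/2 ∈ σ^{q−2}([τ₋,τ₊]). -/

import Mathlib

noncomputable def dbl : AddCircle (1 : ℝ) → AddCircle (1 : ℝ) := fun x => x + x

open Set MeasureTheory

private lemma dbl_coe (t : ℝ) : dbl (t : AddCircle (1:ℝ)) = ((2 * t : ℝ) : AddCircle (1:ℝ)) := by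
  show (t : AddCircle (1:ℝ)) + t = _
  rw [← AddCircle.coe_add]
  congr 1; ring

private lemma dbl_iter_coe (j : ℕ) (t : ℝ) :
    dbl^[j] (t : AddCircle (1:ℝ)) = ((2^j * t : ℝ) : AddCircle (1:ℝ)) := by
  induction j generalizing t with
  | zero => simp
  | succ n ih =>
    rw [Function.iterate_succ_apply, dbl_coe, ih]
    congr 1; ring

private lemma dbl_zero : dbl (0 : AddCircle (1:ℝ)) = 0 := add_zero 0

private lemma coe_int_zero (n : ℤ) : ((n : ℝ) : AddCircle (1:ℝ)) = 0 := by
  rw [AddCircle.coe_eq_zero_iff]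
  exact ⟨n, by simp⟩

private lemma coe_zero_int {x : ℝ} (h : (x : AddCircle (1:ℝ)) = 0) : ∃ n : ℤ, (n : ℝ) = x := by
  rw [AddCircle.coe_eq_zero_iff] at h
  obtain ⟨n, hn⟩ := h
  exact ⟨n, by simpa using hn⟩

private lemma hopen' (s : Set ℝ) (hs : IsOpen s) :
    IsOpen ((fun x : ℝ => (x : AddCircle (1:ℝ))) '' s) :=
  QuotientAddGroup.isOpenMap_coe _ hs

private lemma vol_arc (a b : ℝ) :
    ENNReal.ofReal (min (b - a) 1) ≤
      volume ((fun x : ℝ => (x : AddCircle (1:ℝ))) '' Ioo a b) := by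
  rcases le_or_gt b a with h | h
  · have : min (b - a) 1 ≤ 0 := le_trans (min_le_left _ _) (by linarith)
    simp [ENNReal.ofReal_eq_zero.mpr this]
  · have hmeas : MeasurableSet ((fun x : ℝ => (x : AddCircle (1:ℝ))) '' Ioo a b) :=
      (hopen' _ isOpen_Ioo).measurableSet
    rw [AddCircle.add_projection_respects_measure (1:ℝ) a hmeas]
    have hsub : Ioo a (min b (a+1)) ⊆
        (QuotientAddGroup.mk ⁻¹' ((fun x : ℝ => (x : AddCircle (1:ℝ))) '' Ioo a b)) ∩ Ioc a (a+1) := by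
      intro x hx
      refine ⟨⟨x, ⟨hx.1, lt_of_lt_of_le hx.2 (min_le_left _ _)⟩, rfl⟩,
        hx.1, le_of_lt (lt_of_lt_of_le hx.2 (min_le_right _ _))⟩
    refine le_trans ?_ (measure_mono hsub)
    rw [Real.volume_Ioo]
    apply ENNReal.ofReal_le_ofReal
    rcases le_total b (a+1) with h' | h' <;>
      simp [min_eq_left, min_eq_right, h'] <;> linarith

private lemma my_geom_sum (q : ℕ) : ∑ j ∈ Finset.range q, (2:ℝ)^j = 2^q - 1 := by
  induction q with
  | zero => simp
  | succ n ih => rw [Finset.sum_range_succ, ih]; ring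

/-- For reduced `p/q` with `q ≥ 2`, let `0 < τ₋ < τ₊ < 1` be angles of exact period
`q` under doubling whose orbit intervals `σ^j([τ₋,τ₊])`, `0 ≤ j < q`, are pairwise
interiorly disjoint (with `σ^j` injective on `[τ₋,τ₊]` for `j < q−1`). Then
`0 ∈ σ^{q−1}([τ₋,τ₊])` and `1/2 ∈ σ^{q−2}([τ₋,τ₊])`. -/
theorem zero_and_half_in_orbit_intervals (p q : ℕ) (hq : 2 ≤ q)
    (hcop : Nat.Coprime p q) (hp0 : 0 < p) (hpq : p < q)
    (τm τp : ℝ) (h0 : 0 < τm) (h1 : τm < τp) (h2 : τp < 1)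
    (hperm : dbl^[q] (τm : AddCircle (1 : ℝ)) = (τm : AddCircle (1 : ℝ)))
    (hperp : dbl^[q] (τp : AddCircle (1 : ℝ)) = (τp : AddCircle (1 : ℝ)))
    (hexm : ∀ j : ℕ, 0 < j → j < q →
      dbl^[j] (τm : AddCircle (1 : ℝ)) ≠ (τm : AddCircle (1 : ℝ)))
    (hexp : ∀ j : ℕ, 0 < j → j < q →
      dbl^[j] (τp : AddCircle (1 : ℝ)) ≠ (τp : AddCircle (1 : ℝ)))
    (I : Set (AddCircle (1 : ℝ)))
    (hI : I = (fun x : ℝ => (x : AddCircle (1 : ℝ))) '' Set.Icc τm τp)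
    (hdisj : ∀ i j : ℕ, i < q → j < q → i ≠ j →
      interior (dbl^[i] '' I) ∩ interior (dbl^[j] '' I) = ∅)
    (hinj : ∀ j : ℕ, j < q - 1 → Set.InjOn (dbl^[j]) I) :
    (0 : AddCircle (1 : ℝ)) ∈ dbl^[q - 1] '' I ∧
    (((1 : ℝ) / 2 : ℝ) : AddCircle (1 : ℝ)) ∈ dbl^[q - 2] '' I := by
  clear hcop hp0 hpq hexm hexp hinj
  set φ : ℝ → AddCircle (1:ℝ) := fun x => (x : AddCircle (1:ℝ)) with hφ
  -- image formula
  have hA : ∀ j : ℕ, dbl^[j] '' I = φ '' Icc (2^j * τm) (2^j * τp) := by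
    intro j
    rw [hI, ← Set.image_comp]
    have h1' : (dbl^[j] ∘ φ) = φ ∘ (fun x : ℝ => 2^j * x) := by
      funext t; exact dbl_iter_coe j t
    rw [h1', Set.image_comp, Set.image_mul_left_Icc' (by positivity : (0:ℝ) < 2^j)]
  -- open arcs inside interiors
  have hV : ∀ j : ℕ, φ '' Ioo (2^j * τm) (2^j * τp) ⊆ interior (dbl^[j] '' I) := by
    intro j
    apply interior_maximal
    · rw [hA j]; exact Set.image_mono Ioo_subset_Icc_self
    · exact hopen' _ isOpen_Ioo
  -- integrality of periodic points
  have key : ∀ τ : ℝ, dbl^[q] (τ : AddCircle (1:ℝ)) = τ → ∃ n : ℤ, ((2:ℝ)^q - 1) * τ = n := by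
    intro τ h
    rw [dbl_iter_coe] at h
    have hz : ((2^q * τ - τ : ℝ) : AddCircle (1:ℝ)) = 0 := by
      rw [QuotientAddGroup.mk_sub] at *
      rw [h]; exact sub_self _
    obtain ⟨n, hn⟩ := coe_zero_int hz
    exact ⟨n, by linarith [hn]⟩
  obtain ⟨nm, hnm⟩ := key τm hperm
  obtain ⟨np, hnp⟩ := key τp hperp
  have hL : (0:ℝ) < 2^q - 1 := by
    have : (1:ℝ) < 2^q := one_lt_pow₀ one_lt_two (by omega)
    linarith
  set ℓ : ℝ := τp - τm with hℓdef
  have hℓ : 0 < ℓ := sub_pos.mpr h1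
  -- measure estimates
  have hdisjV : (↑(Finset.range q) : Set ℕ).PairwiseDisjoint
      (fun j => φ '' Ioo (2^j * τm) (2^j * τp)) := by
    intro i hi j hj hij
    simp only [Finset.coe_range, mem_Iio] at hi hj
    simp only [Function.onFun]
    rw [Set.disjoint_left]
    intro x hxi hxj
    have h := hdisj i j hi hj hij
    have : x ∈ interior (dbl^[i] '' I) ∩ interior (dbl^[j] '' I) := ⟨hV i hxi, hV j hxj⟩
    rw [h] at this
    exact this
  have hmeasV : ∀ j : ℕ, MeasurableSet (φ '' Ioo (2^j * τm) (2^j * τp)) :=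
    fun j => (hopen' _ isOpen_Ioo).measurableSet
  have hsum : ∑ j ∈ Finset.range q, volume (φ '' Ioo (2^j * τm) (2^j * τp)) ≤ ENNReal.ofReal 1 := by
    rw [← measure_biUnion_finset hdisjV (fun j _ => hmeasV j)]
    refine le_trans (measure_mono (subset_univ _)) ?_
    rw [AddCircle.measure_univ]
  have hlow : ∀ j : ℕ, ENNReal.ofReal (min (2^j * ℓ) 1) ≤
      volume (φ '' Ioo (2^j * τm) (2^j * τp)) := by
    intro j
    have := vol_arc (2^j * τm) (2^j * τp)
    have e : (2:ℝ)^j * τp - 2^j * τm = 2^j * ℓ := by rw [hℓdef]; ring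
    rw [e] at this
    exact this
  have hsumR : ∑ j ∈ Finset.range q, min ((2:ℝ)^j * ℓ) 1 ≤ 1 := by
    have hnn : ∀ j ∈ Finset.range q, (0:ℝ) ≤ min ((2:ℝ)^j * ℓ) 1 :=
      fun j _ => le_min (by positivity) zero_le_one
    have h1' : ENNReal.ofReal (∑ j ∈ Finset.range q, min ((2:ℝ)^j * ℓ) 1)
        = ∑ j ∈ Finset.range q, ENNReal.ofReal (min ((2:ℝ)^j * ℓ) 1) :=
      ENNReal.ofReal_sum_of_nonneg hnn
    have h2' : ∑ j ∈ Finset.range q, ENNReal.ofReal (min ((2:ℝ)^j * ℓ) 1) ≤ ENNReal.ofReal 1 :=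
      le_trans (Finset.sum_le_sum fun j _ => hlow j) hsum
    rw [← h1'] at h2'
    exact (ENNReal.ofReal_le_ofReal_iff zero_le_one).mp h2'
  -- each arc has length < 1
  have hlt1 : ∀ j < q, (2:ℝ)^j * ℓ < 1 := by
    intro j hj
    by_contra hcon
    push_neg at hcon
    set j' : ℕ := if j = 0 then 1 else 0 with hj'def
    have hj'q : j' < q := by rw [hj'def]; split <;> omega
    have hne : j ≠ j' := by rw [hj'def]; split <;> omega
    have hss : ({j, j'} : Finset ℕ) ⊆ Finset.range q := by
      intro i hi
      simp only [Finset.mem_insert, Finset.mem_singleton] at hi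
      rcases hi with h | h <;> simp [h, Finset.mem_range, hj, hj'q]
    have hps : ∑ i ∈ ({j, j'} : Finset ℕ), min ((2:ℝ)^i * ℓ) 1
        ≤ ∑ i ∈ Finset.range q, min ((2:ℝ)^i * ℓ) 1 :=
      Finset.sum_le_sum_of_subset_of_nonneg hss
        (fun i _ _ => le_min (by positivity) zero_le_one)
    rw [Finset.sum_pair hne] at hps
    have hmj : min ((2:ℝ)^j * ℓ) 1 = 1 := min_eq_right hcon
    have hmj' : (0:ℝ) < min ((2:ℝ)^j' * ℓ) 1 := lt_min (by positivity) zero_lt_one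
    linarith
  have hsum2 : ((2:ℝ)^q - 1) * ℓ ≤ 1 := by
    have : ∑ j ∈ Finset.range q, min ((2:ℝ)^j * ℓ) 1
        = ∑ j ∈ Finset.range q, (2:ℝ)^j * ℓ := by
      apply Finset.sum_congr rfl
      intro j hj
      exact min_eq_left (le_of_lt (hlt1 j (Finset.mem_range.mp hj)))
    rw [this, ← Finset.sum_mul, my_geom_sum] at hsumR
    exact hsumR
  -- exact length 1/(2^q-1)
  have hnpnm : np - nm = 1 := by
    have e1 : ((2:ℝ)^q - 1) * ℓ = (np:ℝ) - nm := by rw [hℓdef]; rw [mul_sub, hnm, hnp]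
    have e2 : (0:ℝ) < (np:ℝ) - (nm:ℝ) := by rw [← e1]; positivity
    have e3 : (np:ℝ) - (nm:ℝ) ≤ 1 := by rw [← e1]; exact hsum2
    have i2 : (0:ℤ) < np - nm := by exact_mod_cast (by push_cast; linarith : (0:ℝ) < ((np - nm : ℤ):ℝ))
    have i3 : np - nm ≤ 1 := by exact_mod_cast (by push_cast; linarith : ((np - nm : ℤ):ℝ) ≤ 1)
    omega
  have hLl : ((2:ℝ)^q - 1) * ℓ = 1 := by
    have e1 : ((2:ℝ)^q - 1) * ℓ = (np:ℝ) - nm := by rw [hℓdef]; rw [mul_sub, hnm, hnp]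
    rw [e1]
    have : ((np - nm : ℤ):ℝ) = 1 := by rw [hnpnm]; norm_num
    push_cast at this
    linarith
  -- covering
  have hcover : (⋃ j ∈ Finset.range q, dbl^[j] '' I) = univ := by
    by_contra hne'
    have hUne : ((⋃ j ∈ Finset.range q, dbl^[j] '' I)ᶜ).Nonempty := by
      rw [Set.nonempty_compl]; exact hne'
    have hUopen : IsOpen ((⋃ j ∈ Finset.range q, dbl^[j] '' I)ᶜ) := by
      rw [isOpen_compl_iff]
      apply Set.Finite.isClosed_biUnion (Finset.finite_toSet _)
      intro j _
      rw [hA j]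
      exact (isCompact_Icc.image (AddCircle.continuous_mk' 1)).isClosed
    set U := (⋃ j ∈ Finset.range q, dbl^[j] '' I)ᶜ
    set W := ⋃ j ∈ Finset.range q, φ '' Ioo (2^j * τm) (2^j * τp) with hWdef
    have hWopen : IsOpen W := isOpen_biUnion fun j _ => hopen' _ isOpen_Ioo
    have hWsub : W ⊆ ⋃ j ∈ Finset.range q, dbl^[j] '' I := by
      apply Set.iUnion₂_mono
      intro j hj
      rw [hA j]
      exact Set.image_mono Ioo_subset_Icc_self
    have hdisjUW : Disjoint U W := by
      rw [Set.disjoint_left]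
      intro x hxU hxW
      exact hxU (hWsub hxW)
    have hWvol : ENNReal.ofReal 1 ≤ volume W := by
      rw [hWdef, measure_biUnion_finset hdisjV (fun j _ => hmeasV j)]
      calc ENNReal.ofReal 1 = ENNReal.ofReal (∑ j ∈ Finset.range q, (2:ℝ)^j * ℓ) := by
            rw [← Finset.sum_mul, my_geom_sum, hLl]
        _ = ∑ j ∈ Finset.range q, ENNReal.ofReal ((2:ℝ)^j * ℓ) :=
            ENNReal.ofReal_sum_of_nonneg (fun j _ => by positivity)
        _ ≤ ∑ j ∈ Finset.range q, volume (φ '' Ioo (2^j * τm) (2^j * τp)) := by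
            apply Finset.sum_le_sum
            intro j hj
            have := hlow j
            rwa [min_eq_left (le_of_lt (hlt1 j (Finset.mem_range.mp hj)))] at this
    have hbound : volume U + volume W ≤ ENNReal.ofReal 1 := by
      rw [← measure_union hdisjUW hWopen.measurableSet]
      refine le_trans (measure_mono (subset_univ _)) ?_
      rw [AddCircle.measure_univ]
    have hWle : volume W ≤ ENNReal.ofReal 1 := le_trans le_add_self hbound
    have hWeq : volume W = ENNReal.ofReal 1 := le_antisymm hWle hWvol
    have hU0 : volume U = 0 := by
      rw [hWeq] at hbound
      have h1ne : (ENNReal.ofReal 1) ≠ ⊤ := ENNReal.ofReal_ne_top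
      have := (ENNReal.add_le_add_iff_right h1ne).mp
        (by rw [zero_add]; exact hbound : volume U + ENNReal.ofReal 1 ≤ 0 + ENNReal.ofReal 1)
      exact le_antisymm this zero_le
    exact hUne.ne_empty (hUopen.eq_empty_of_measure_zero hU0)
  -- endpoints are never 0
  have hend : ∀ j, j < q → (∀ τ : ℝ, 0 < τ → τ < 1 →
      dbl^[q] (τ : AddCircle (1:ℝ)) = τ → φ (2^j * τ) ≠ 0) := by
    intro j hj τ hτ0 hτ1 hper h
    have h2 : dbl^[q] (τ : AddCircle (1:ℝ)) = 0 := by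
      rw [show q = (q - j) + j from (Nat.sub_add_cancel hj.le).symm,
        Function.iterate_add_apply, dbl_iter_coe j]
      rw [show ((2^j * τ : ℝ) : AddCircle (1:ℝ)) = 0 from h]
      exact Function.iterate_fixed dbl_zero _
    rw [hper] at h2
    obtain ⟨n, hn⟩ := coe_zero_int h2
    have n0 : (0:ℤ) < n := by exact_mod_cast (by rw [hn]; exact hτ0 : (0:ℝ) < (n:ℝ))
    have n1 : (n:ℤ) < 1 := by exact_mod_cast (by rw [hn]; exact hτ1 : ((n:ℝ)) < 1)
    omega
  -- 0 lies in some arc, not at endpoint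
  have h0mem : (0 : AddCircle (1:ℝ)) ∈ ⋃ j ∈ Finset.range q, dbl^[j] '' I := by
    rw [hcover]; trivial
  obtain ⟨j₀, hj₀mem, h0A⟩ := Set.mem_iUnion₂.mp h0mem
  have hj₀ : j₀ < q := Finset.mem_range.mp hj₀mem
  rw [hA j₀] at h0A
  obtain ⟨t, ht, htc⟩ := h0A
  have htm : t ≠ 2^j₀ * τm := by
    intro h; exact hend j₀ hj₀ τm h0 (h1.trans h2) hperm (h ▸ htc)
  have htp : t ≠ 2^j₀ * τp := by
    intro h; exact hend j₀ hj₀ τp (h0.trans h1) h2 hperp (h ▸ htc)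
  have hti : t ∈ Ioo (2^j₀ * τm) (2^j₀ * τp) :=
    ⟨lt_of_le_of_ne ht.1 (Ne.symm htm), lt_of_le_of_ne ht.2 htp⟩
  -- propagating 0 forward forces j₀ = q - 1
  have hstep : ∀ j : ℕ, ∀ s : ℝ, s ∈ Ioo (2^j * τm) (2^j * τp) → φ s = 0 →
      (2 * s) ∈ Ioo (2^(j+1) * τm) (2^(j+1) * τp) ∧ φ (2 * s) = 0 := by
    intro j s hs hsc
    constructor
    · constructor
      · have := hs.1; rw [pow_succ]; nlinarith
      · have := hs.2; rw [pow_succ]; nlinarith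
    · show ((2 * s : ℝ) : AddCircle (1:ℝ)) = 0
      rw [← dbl_coe]
      rw [show ((s:ℝ) : AddCircle (1:ℝ)) = 0 from hsc]
      exact dbl_zero
  have hj₀eq : j₀ = q - 1 := by
    by_contra hne''
    have hj₀lt : j₀ + 1 < q := by omega
    obtain ⟨h2t, h2tc⟩ := hstep j₀ t hti htc
    have hmem1 : (0 : AddCircle (1:ℝ)) ∈ interior (dbl^[j₀] '' I) := hV j₀ ⟨t, hti, htc⟩
    have hmem2 : (0 : AddCircle (1:ℝ)) ∈ interior (dbl^[j₀+1] '' I) :=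
      hV (j₀+1) ⟨2*t, h2t, h2tc⟩
    have := hdisj j₀ (j₀+1) hj₀ hj₀lt (by omega)
    have hx : (0 : AddCircle (1:ℝ)) ∈ interior (dbl^[j₀] '' I) ∩ interior (dbl^[j₀+1] '' I) :=
      ⟨hmem1, hmem2⟩
    rw [this] at hx
    exact hx
  subst hj₀eq
  constructor
  · rw [hA (q-1)]; exact ⟨t, ht, htc⟩
  -- second part: 1/2 ∈ A (q-2)
  · obtain ⟨n, hn⟩ := coe_zero_int htc
    have hpow : (2:ℝ)^(q-1) = 2 * 2^(q-2) := by
      rw [show q - 1 = (q - 2) + 1 by omega, pow_succ]; ring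
    have hhalf : t / 2 ∈ Ioo (2^(q-2) * τm) (2^(q-2) * τp) := by
      constructor
      · have := hti.1; rw [hpow] at this; linarith
      · have := hti.2; rw [hpow] at this; linarith
    rcases Int.even_or_odd n with ⟨k, hk⟩ | ⟨k, hk⟩
    · -- even: t/2 is an integer, contradiction with disjointness
      exfalso
      have htk : t / 2 = (k : ℝ) := by
        rw [← hn, hk]; push_cast; ring
      have hc : φ (t / 2) = 0 := by
        show ((t/2 : ℝ) : AddCircle (1:ℝ)) = 0
        rw [htk]; exact coe_int_zero k
      have hmem1 : (0 : AddCircle (1:ℝ)) ∈ interior (dbl^[q-2] '' I) :=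
        hV (q-2) ⟨t/2, hhalf, hc⟩
      have hmem2 : (0 : AddCircle (1:ℝ)) ∈ interior (dbl^[q-1] '' I) :=
        hV (q-1) ⟨t, hti, htc⟩
      have := hdisj (q-2) (q-1) (by omega) (by omega) (by omega)
      have hx : (0 : AddCircle (1:ℝ)) ∈ interior (dbl^[q-2] '' I) ∩ interior (dbl^[q-1] '' I) :=
        ⟨hmem1, hmem2⟩
      rw [this] at hx
      exact hx
    · -- odd: t/2 ≡ 1/2
      have hc : φ (t / 2) = (((1:ℝ)/2 : ℝ) : AddCircle (1:ℝ)) := by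
        show ((t/2 : ℝ) : AddCircle (1:ℝ)) = ((1:ℝ)/2 : ℝ)
        have : ((t/2 - 1/2 : ℝ) : AddCircle (1:ℝ)) = 0 := by
          have e : (t/2 - 1/2 : ℝ) = (k : ℝ) := by rw [← hn, hk]; push_cast; ring
          rw [e]; exact coe_int_zero k
        rw [QuotientAddGroup.mk_sub] at this
        have := sub_eq_zero.mp this
        exact_mod_cast this
      rw [hA (q-2)]
      exact ⟨t/2, Ioo_subset_Icc_self hhalf, hc⟩
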